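/- arXiv:1812.01979 — 8 statements merged into one kernel-verified Lean document; each statement's English description precedes it below -/
import Mathlib

section
/- (Equation (3.12), Theorem 3.3.) In a trans-para-Sasakian manifold the functions α and β are not arbitrary: 2α₀β₀ − dα(ξ) = 0. -/
theorem stmt_3
    (n : ℕ) (hn : 1 ≤ n)
    (V : Type*) [AddCommGroup V] [Module ℝ V] [FiniteDimensional ℝ V]
    (hdim : Module.finrank ℝ V = 2 * n + 1)
    (g : LinearMap.BilinForm ℝ V)
    (hg_symm : ∀ X Y : V, g X Y = g Y X)
    (hg_nondeg : g.Nondegenerate)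
    (φ : V →ₗ[ℝ] V) (ξ : V) (η : V →ₗ[ℝ] ℝ)
    (hφξ : φ ξ = 0) (hηφ : ∀ X : V, η (φ X) = 0)
    (hηξ : η ξ = 1) (hφ2 : ∀ X : V, φ (φ X) = X - η X • ξ)
    (hgφ : ∀ X Y : V, g (φ X) (φ Y) = - g X Y + η X * η Y)
    (R : V →ₗ[ℝ] V →ₗ[ℝ] V →ₗ[ℝ] V)
    (hR_a1 : ∀ X Y Z W : V, g (R X Y Z) W = - g (R Y X Z) W)
    (hR_a2 : ∀ X Y Z W : V, g (R X Y Z) W = - g (R X Y W) Z)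
    (hR_pair : ∀ X Y Z W : V, g (R X Y Z) W = g (R Z W X) Y)
    (α₀ β₀ : ℝ) (dα dβ : V →ₗ[ℝ] ℝ)
    (hTPS : ∀ X Y : V, R X Y ξ =
      -((α₀ ^ 2 + β₀ ^ 2) • (η Y • X - η X • Y))
      - (2 * α₀ * β₀) • (η Y • φ X - η X • φ Y)
      - dα X • φ Y + dα Y • φ X + dβ Y • φ (φ X) - dβ X • φ (φ Y))
    :
    2 * α₀ * β₀ - dα ξ = 0 := by
  -- basic identities
  have gXξ : ∀ X : V, g X ξ = η X := by
    intro X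
    have h := hgφ X ξ
    rw [hφξ, hηξ] at h
    simp at h
    linarith
  have gξX : ∀ X : V, g ξ X = η X := fun X => by rw [hg_symm]; exact gXξ X
  have gφξ : ∀ X : V, g (φ X) ξ = 0 := fun X => by rw [gXξ, hηφ]
  have gskew : ∀ X Y : V, g (φ X) Y = - g X (φ Y) := by
    intro X Y
    have h := hgφ X (φ Y)
    rw [hηφ, hφ2 Y] at h
    simp [map_sub, map_smul, gφξ] at h
    linarith
  set A := α₀ ^ 2 + β₀ ^ 2 with hA
  set c := dα ξ - 2 * α₀ * β₀ with hc
  -- key pointwise identity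
  have key : ∀ X W : V, c * g (φ X) W = 0 := by
    intro X W
    have E : g (R X ξ ξ) W = - g (R ξ W ξ) X := by
      rw [hR_pair, hR_a2]
    have h1 := hTPS X ξ
    have h2 := hTPS ξ W
    rw [h1, h2] at E
    simp only [hφξ, hηξ, hηφ, hφ2, map_zero, map_sub, map_add, map_neg, map_smul,
      LinearMap.sub_apply, LinearMap.add_apply, LinearMap.neg_apply, LinearMap.smul_apply,
      smul_eq_mul, one_smul, smul_sub, smul_zero, zero_smul, sub_zero, zero_sub, mul_zero,
      LinearMap.zero_apply, gXξ, gξX, gφξ] at E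
    have hskew1 : g (φ W) X = - g (φ X) W := by
      rw [gskew W X, hg_symm]
    have hsym : g W X = g X W := hg_symm W X
    -- E should reduce to c * g (φ X) W = - c * g (φ X) W (up to matching terms)
    rw [hskew1, hsym] at E
    ring_nf at E ⊢
    linarith [E]
  -- find X with φ X ≠ 0
  by_contra hne
  have hc0 : c ≠ 0 := by
    intro h
    apply hne
    rw [hc] at h
    linarith
  have hφ0 : ∀ X : V, φ X = 0 := by
    intro X
    have hz : c • φ X = 0 := by
      apply hg_nondeg.1
      intro W
      simp only [map_smul, LinearMap.smul_apply, smul_eq_mul]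
      exact key X W
    rcases smul_eq_zero.mp hz with h | h
    · exact absurd h hc0
    · exact h
  have hspan : ∀ X : V, η X • ξ = X := by
    intro X
    have := hφ2 X
    rw [hφ0 X, map_zero] at this
    have : X - η X • ξ = 0 := this.symm
    linear_combination (norm := module) -this
  have hle : Module.finrank ℝ V ≤ 1 := by
    apply finrank_le_one ξ
    intro w
    exact ⟨η w, hspan w⟩
  omega
end

section
/- (Equation (3.11), Theorem 3.3.) For every X ∈ V one has R(ξ, X)ξ = (α₀² + β₀² − dβ(ξ))(X − η(X)ξ). -/
theorem stmt_4
    (n : ℕ) (hn : 1 ≤ n)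
    (V : Type*) [AddCommGroup V] [Module ℝ V] [FiniteDimensional ℝ V]
    (hdim : Module.finrank ℝ V = 2 * n + 1)
    (g : LinearMap.BilinForm ℝ V)
    (hg_symm : ∀ X Y : V, g X Y = g Y X)
    (hg_nondeg : g.Nondegenerate)
    (φ : V →ₗ[ℝ] V) (ξ : V) (η : V →ₗ[ℝ] ℝ)
    (hφξ : φ ξ = 0) (hηφ : ∀ X : V, η (φ X) = 0)
    (hηξ : η ξ = 1) (hφ2 : ∀ X : V, φ (φ X) = X - η X • ξ)
    (hgφ : ∀ X Y : V, g (φ X) (φ Y) = - g X Y + η X * η Y)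
    (R : V →ₗ[ℝ] V →ₗ[ℝ] V →ₗ[ℝ] V)
    (hR_a1 : ∀ X Y Z W : V, g (R X Y Z) W = - g (R Y X Z) W)
    (hR_a2 : ∀ X Y Z W : V, g (R X Y Z) W = - g (R X Y W) Z)
    (hR_pair : ∀ X Y Z W : V, g (R X Y Z) W = g (R Z W X) Y)
    (α₀ β₀ : ℝ) (dα dβ : V →ₗ[ℝ] ℝ)
    (hTPS : ∀ X Y : V, R X Y ξ =
      -((α₀ ^ 2 + β₀ ^ 2) • (η Y • X - η X • Y))
      - (2 * α₀ * β₀) • (η Y • φ X - η X • φ Y)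
      - dα X • φ Y + dα Y • φ X + dβ Y • φ (φ X) - dβ X • φ (φ Y))
    :
    ∀ X : V, R ξ X ξ = (α₀ ^ 2 + β₀ ^ 2 - dβ ξ) • (X - η X • ξ) := by
  set s : ℝ := α₀ ^ 2 + β₀ ^ 2 - dβ ξ with hs
  set c : ℝ := 2 * α₀ * β₀ - dα ξ with hc
  -- g X ξ = η X
  have hgξ : ∀ X : V, g X ξ = η X := by
    intro X
    have := hgφ X ξ
    rw [hφξ, hηξ] at this
    simp only [map_zero, mul_one] at this
    linarith
  have hgξ' : ∀ X : V, g ξ X = η X := fun X => by rw [hg_symm]; exact hgξ X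
  -- φ is skew-adjoint
  have hskew : ∀ X W : V, g (φ X) W = - g X (φ W) := by
    intro X W
    have h1 := hgφ X (φ W)
    rw [hφ2 W, hηφ W, mul_zero, add_zero] at h1
    have h2 : g (φ X) (W - η W • ξ) = g (φ X) W - η W * g (φ X) ξ := by
      simp [map_sub, map_smul, smul_eq_mul]
    rw [hgξ, hηφ, mul_zero, sub_zero] at h2
    rw [h2] at h1
    exact h1
  -- explicit formula for R ξ X ξ
  have hE : ∀ X : V, R ξ X ξ = s • (X - η X • ξ) + c • φ X := by
    intro X
    have h := hTPS ξ X
    simp only [hφξ, hηξ, hφ2 X, map_zero, smul_zero, one_smul] at h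
    rw [h, hs, hc]
    module
  -- c • φ X = 0 for all X
  have hcφ : ∀ X : V, c • φ X = 0 := by
    intro X
    apply hg_nondeg.1
    intro W
    have hp := hR_pair ξ X ξ W
    rw [hE X, hE W] at hp
    have e1 : g (s • (X - η X • ξ) + c • φ X) W
        = s * (g X W - η X * η W) + c * g (φ X) W := by
      simp only [map_add, map_smul, map_sub, LinearMap.add_apply, LinearMap.smul_apply,
        LinearMap.sub_apply, smul_eq_mul, hgξ']
    have e2 : g (s • (W - η W • ξ) + c • φ W) X
        = s * (g W X - η W * η X) + c * g (φ W) X := by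
      simp only [map_add, map_smul, map_sub, LinearMap.add_apply, LinearMap.smul_apply,
        LinearMap.sub_apply, smul_eq_mul, hgξ']
    rw [e1, e2, hg_symm W X, hskew W X, hg_symm W (φ X)] at hp
    simp only [mul_neg] at hp
    have hz : c * g (φ X) W = 0 := by linarith [hp]
    simp only [map_smul, LinearMap.smul_apply, smul_eq_mul]
    linarith [hz]
  -- there is X with φ X ≠ 0
  have hexists : ∃ X : V, φ X ≠ 0 := by
    by_contra h
    push_neg at h
    have hspan : ∀ X : V, X = η X • ξ := by
      intro X
      have h2 := hφ2 X
      rw [h X, map_zero] at h2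
      exact (eq_of_sub_eq_zero h2.symm)
    have hξ0 : ξ ≠ 0 := by
      intro h0; rw [h0, map_zero] at hηξ; norm_num at hηξ
    have htop : Submodule.span ℝ ({ξ} : Set V) = ⊤ := by
      rw [Submodule.eq_top_iff']
      intro X
      rw [hspan X]
      exact Submodule.smul_mem _ _ (Submodule.mem_span_singleton_self ξ)
    have h1 : Module.finrank ℝ V = 1 := by
      rw [← finrank_top ℝ V, ← htop, finrank_span_singleton hξ0]
    omega
  obtain ⟨X₀, hX₀⟩ := hexists
  have hc0 : c = 0 := by
    rcases smul_eq_zero.mp (hcφ X₀) with h | h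
    · exact h
    · exact absurd h hX₀
  intro X
  rw [hE X, hc0, zero_smul, add_zero]
end

section
/- (Proposition 3.2, ξ-sectional curvature.) For every X ∈ V with η(X) = 0 and g(X,X) = ε, where ε = 1 or ε = −1, one has g(R(X, ξ)ξ, X) = −ε(α₀² + β₀² − dβ(ξ)); equivalently the ξ-sectional curvature K(ξ, X) := ε·g(R(X, ξ)ξ, X) of the plane spanned by ξ and X equals −(α₀² + β₀² − dβ(ξ)). -/
theorem stmt_5
    (n : ℕ) (hn : 1 ≤ n)
    (V : Type*) [AddCommGroup V] [Module ℝ V] [FiniteDimensional ℝ V]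
    (hdim : Module.finrank ℝ V = 2 * n + 1)
    (g : LinearMap.BilinForm ℝ V)
    (hg_symm : ∀ X Y : V, g X Y = g Y X)
    (hg_nondeg : g.Nondegenerate)
    (φ : V →ₗ[ℝ] V) (ξ : V) (η : V →ₗ[ℝ] ℝ)
    (hφξ : φ ξ = 0) (hηφ : ∀ X : V, η (φ X) = 0)
    (hηξ : η ξ = 1) (hφ2 : ∀ X : V, φ (φ X) = X - η X • ξ)
    (hgφ : ∀ X Y : V, g (φ X) (φ Y) = - g X Y + η X * η Y)
    (R : V →ₗ[ℝ] V →ₗ[ℝ] V →ₗ[ℝ] V)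
    (hR_a1 : ∀ X Y Z W : V, g (R X Y Z) W = - g (R Y X Z) W)
    (hR_a2 : ∀ X Y Z W : V, g (R X Y Z) W = - g (R X Y W) Z)
    (hR_pair : ∀ X Y Z W : V, g (R X Y Z) W = g (R Z W X) Y)
    (α₀ β₀ : ℝ) (dα dβ : V →ₗ[ℝ] ℝ)
    (hTPS : ∀ X Y : V, R X Y ξ =
      -((α₀ ^ 2 + β₀ ^ 2) • (η Y • X - η X • Y))
      - (2 * α₀ * β₀) • (η Y • φ X - η X • φ Y)
      - dα X • φ Y + dα Y • φ X + dβ Y • φ (φ X) - dβ X • φ (φ Y))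
    :
    ∀ (X : V) (ε : ℝ), (ε = 1 ∨ ε = -1) → η X = 0 → g X X = ε →
      g (R X ξ ξ) X = -(ε * (α₀ ^ 2 + β₀ ^ 2 - dβ ξ)) ∧
      ε * g (R X ξ ξ) X = -(α₀ ^ 2 + β₀ ^ 2 - dβ ξ) := by
  intro X ε hε hηX hgXX
  have hφX : g (φ X) X = 0 := by
    have h1 : g (φ X) (φ (φ X)) = - g X (φ X) + η X * η (φ X) := hgφ X (φ X)
    rw [hφ2, hηX, hηφ] at h1
    simp only [zero_smul, sub_zero, mul_zero, add_zero] at h1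
    have h2 : g X (φ X) = g (φ X) X := hg_symm _ _
    linarith [h1, h2]
  have key : g (R X ξ ξ) X = -(ε * (α₀ ^ 2 + β₀ ^ 2 - dβ ξ)) := by
    rw [hTPS]
    simp only [hφξ, hηξ, hηX, hφ2, smul_zero, zero_smul, one_smul, sub_zero,
      smul_sub, map_add, map_sub, map_neg, map_smul, LinearMap.add_apply,
      LinearMap.sub_apply, LinearMap.neg_apply, LinearMap.smul_apply, smul_eq_mul]
    rw [hgXX, hφX]
    simp only [map_zero, LinearMap.zero_apply]
    ring
  exact ⟨key, by rw [key]; rcases hε with h | h <;> rw [h] <;> ring⟩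
end

section
/- (Proposition 3.4, equation (3.14).) For every X ∈ V one has Ric(X, ξ) = −(2n(α₀² + β₀²) − dβ(ξ))η(X) + (2n−1)dβ(X) − dα(φX). -/
/-- The Ricci tensor: `Ric R Y Z` is the trace of the linear map `X ↦ R X Y Z`. -/
noncomputable def Ric {V : Type*} [AddCommGroup V] [Module ℝ V]
    (R : V →ₗ[ℝ] V →ₗ[ℝ] V →ₗ[ℝ] V) (Y Z : V) : ℝ :=
  LinearMap.trace ℝ V ((LinearMap.applyₗ Z).comp (R.flip Y))

theorem stmt_6
    (n : ℕ) (hn : 1 ≤ n)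
    (V : Type*) [AddCommGroup V] [Module ℝ V] [FiniteDimensional ℝ V]
    (hdim : Module.finrank ℝ V = 2 * n + 1)
    (g : LinearMap.BilinForm ℝ V)
    (hg_symm : ∀ X Y : V, g X Y = g Y X)
    (hg_nondeg : g.Nondegenerate)
    (φ : V →ₗ[ℝ] V) (ξ : V) (η : V →ₗ[ℝ] ℝ)
    (hφξ : φ ξ = 0) (hηφ : ∀ X : V, η (φ X) = 0)
    (hηξ : η ξ = 1) (hφ2 : ∀ X : V, φ (φ X) = X - η X • ξ)
    (hgφ : ∀ X Y : V, g (φ X) (φ Y) = - g X Y + η X * η Y)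
    (R : V →ₗ[ℝ] V →ₗ[ℝ] V →ₗ[ℝ] V)
    (hR_a1 : ∀ X Y Z W : V, g (R X Y Z) W = - g (R Y X Z) W)
    (hR_a2 : ∀ X Y Z W : V, g (R X Y Z) W = - g (R X Y W) Z)
    (hR_pair : ∀ X Y Z W : V, g (R X Y Z) W = g (R Z W X) Y)
    (α₀ β₀ : ℝ) (dα dβ : V →ₗ[ℝ] ℝ)
    (hTPS : ∀ X Y : V, R X Y ξ =
      -((α₀ ^ 2 + β₀ ^ 2) • (η Y • X - η X • Y))
      - (2 * α₀ * β₀) • (η Y • φ X - η X • φ Y)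
      - dα X • φ Y + dα Y • φ X + dβ Y • φ (φ X) - dβ X • φ (φ Y))
    :
    ∀ X : V, Ric R X ξ =
      -(2 * (n : ℝ) * (α₀ ^ 2 + β₀ ^ 2) - dβ ξ) * η X
      + (2 * (n : ℝ) - 1) * dβ X - dα (φ X) := by
  -- trace of a rank-one map
  have tr_rank1 : ∀ (f : V →ₗ[ℝ] ℝ) (x : V),
      LinearMap.trace ℝ V (f.smulRight x) = f x := by
    intro f x
    have h : f.smulRight x = dualTensorHom ℝ V V (f ⊗ₜ[ℝ] x) := by
      ext z; simp
    rw [h, LinearMap.trace_eq_contract_apply, contractLeft_apply]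
  -- g X ξ = η X
  have hgξ : ∀ X : V, g X ξ = η X := by
    intro X
    have := hgφ X ξ
    rw [hφξ, hηξ] at this
    simp at this
    linarith
  -- φ is g-skew
  have hskew : ∀ X Y : V, g (φ X) Y = - g X (φ Y) := by
    intro X Y
    have hY : φ (φ Y) + η Y • ξ = Y := by rw [hφ2]; abel
    calc g (φ X) Y = g (φ X) (φ (φ Y) + η Y • ξ) := by rw [hY]
      _ = g (φ X) (φ (φ Y)) + η Y * g (φ X) ξ := by simp [mul_comm]
      _ = (- g X (φ Y) + η X * η (φ Y)) + η Y * g (φ X) ξ := by rw [hgφ]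
      _ = - g X (φ Y) + η Y * η (φ X) := by rw [hηφ, hgξ]; ring
      _ = - g X (φ Y) := by rw [hηφ]; ring
  -- trace of φ is 0
  have trφ : LinearMap.trace ℝ V φ = 0 := by
    set e := g.toDual hg_nondeg with he
    have hconj : φ = -(e.symm.conj (Module.Dual.transpose (R := ℝ) φ)) := by
      ext X
      apply e.injective
      rw [LinearMap.neg_apply, LinearEquiv.conj_apply, map_neg]
      simp only [LinearMap.comp_apply, LinearEquiv.coe_coe, LinearEquiv.apply_symm_apply]
      ext Y
      have h1 : e (φ X) Y = g (φ X) Y := rfl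
      have h2 : (Module.Dual.transpose (R := ℝ) φ) (e X) Y = g X (φ Y) := rfl
      rw [h1, LinearMap.neg_apply, LinearEquiv.symm_symm, h2, hskew]
    have := congrArg (LinearMap.trace ℝ V) hconj
    rw [map_neg, LinearMap.trace_conj', LinearMap.trace_transpose'] at this
    linarith
  -- trace of φ ∘ φ
  have trφφ : LinearMap.trace ℝ V (φ ∘ₗ φ) = 2 * (n : ℝ) := by
    have h : φ ∘ₗ φ = LinearMap.id - η.smulRight ξ := by
      ext Z; simp [hφ2]
    rw [h, map_sub, LinearMap.trace_id, hdim, tr_rank1, hηξ]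
    push_cast
    ring
  intro X
  have key : (LinearMap.applyₗ ξ).comp (R.flip X) =
      (-((α₀ ^ 2 + β₀ ^ 2) * η X)) • LinearMap.id
      + (α₀ ^ 2 + β₀ ^ 2) • (η.smulRight X)
      + (-(2 * α₀ * β₀ * η X)) • φ
      + (2 * α₀ * β₀) • (η.smulRight (φ X))
      - dα.smulRight (φ X)
      + dα X • φ
      + dβ X • (φ ∘ₗ φ)
      - dβ.smulRight (φ (φ X)) := by
    ext Z
    simp only [LinearMap.comp_apply, LinearMap.flip_apply,
      LinearMap.add_apply, LinearMap.sub_apply, LinearMap.smul_apply,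
      LinearMap.smulRight_apply, LinearMap.id_apply]
    rw [show (LinearMap.applyₗ (R := ℝ) ξ) (R Z X) = R Z X ξ from rfl, hTPS Z X]
    module
  rw [Ric, key]
  simp only [map_add, map_sub, map_smul, LinearMap.trace_id, hdim, tr_rank1, trφ, trφφ,
    smul_eq_mul, hηφ, hφ2 X, map_sub]
  push_cast
  ring
end

section
/- (Proposition 3.4, equation (3.15).) If A, B ∈ V satisfy g(A, X) = dα(X) and g(B, X) = dβ(X) for all X ∈ V (the gradients of α and β), then Qξ = −(2n(α₀² + β₀²) − dβ(ξ))ξ + (2n−1)B + φ(A). -/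
lemma trace_smulRight' {V : Type*} [AddCommGroup V] [Module ℝ V] [FiniteDimensional ℝ V]
    (f : V →ₗ[ℝ] ℝ) (v : V) : LinearMap.trace ℝ V (f.smulRight v) = f v := by
  have h1 : f.smulRight v = (LinearMap.toSpanSingleton ℝ V v).comp f := by
    ext x; simp [LinearMap.toSpanSingleton_apply]
  rw [h1, LinearMap.trace_comp_comm']
  have h2 : f.comp (LinearMap.toSpanSingleton ℝ V v) = f v • LinearMap.id := by
    ext r; simp [LinearMap.toSpanSingleton_apply, mul_comm]
  rw [h2, map_smul, LinearMap.trace_id]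
  simp

open Matrix in
lemma trace_phi {V : Type*} [AddCommGroup V] [Module ℝ V] [FiniteDimensional ℝ V]
    (g : LinearMap.BilinForm ℝ V) (hg_nondeg : g.Nondegenerate)
    (φ : V →ₗ[ℝ] V) (hskew : ∀ X Y : V, g (φ X) Y = - g X (φ Y)) :
    LinearMap.trace ℝ V φ = 0 := by
  classical
  let b := Module.finBasis ℝ V
  set G := LinearMap.BilinForm.toMatrix b g with hG
  set M := LinearMap.toMatrix b b φ with hM
  have hdet : G.det ≠ 0 := by
    rw [← LinearMap.BilinForm.nondegenerate_iff_det_ne_zero b] at *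
    exact hg_nondeg
  have hrel : Mᵀ * G = -(G * M) := by
    have h1 : g.compLeft φ = -(g.compRight φ) := by
      ext X Y
      simp only [LinearMap.BilinForm.compLeft_apply, LinearMap.BilinForm.compRight_apply,
        LinearMap.neg_apply, hskew X Y]
    calc Mᵀ * G = LinearMap.BilinForm.toMatrix b (g.compLeft φ) :=
          (LinearMap.BilinForm.toMatrix_compLeft b g φ).symm
      _ = LinearMap.BilinForm.toMatrix b (-(g.compRight φ)) := by rw [h1]
      _ = -(LinearMap.BilinForm.toMatrix b (g.compRight φ)) := by
          exact map_neg (LinearMap.BilinForm.toMatrix b) (g.compRight φ)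
      _ = -(G * M) := by rw [LinearMap.BilinForm.toMatrix_compRight]
  have hInv : G⁻¹ * G = 1 := Matrix.nonsing_inv_mul G (Ne.isUnit hdet)
  have : M.trace = -M.trace := by
    calc M.trace = (G⁻¹ * (G * M)).trace := by rw [← Matrix.mul_assoc, hInv, Matrix.one_mul]
      _ = (G⁻¹ * (-(Mᵀ * G))).trace := by rw [show G * M = -(Mᵀ * G) by rw [hrel, neg_neg]]
      _ = -((G⁻¹ * Mᵀ) * G).trace := by rw [Matrix.mul_neg, Matrix.trace_neg, Matrix.mul_assoc]
      _ = -(G * (G⁻¹ * Mᵀ)).trace := by rw [Matrix.trace_mul_comm]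
      _ = -Mᵀ.trace := by
          rw [← Matrix.mul_assoc, Matrix.mul_nonsing_inv G (Ne.isUnit hdet), Matrix.one_mul]
      _ = -M.trace := by rw [Matrix.trace_transpose]
  have hM0 : M.trace = 0 := by linarith
  rw [LinearMap.trace_eq_matrix_trace ℝ b φ, ← hM, hM0]

theorem stmt_7
    (n : ℕ) (hn : 1 ≤ n)
    (V : Type*) [AddCommGroup V] [Module ℝ V] [FiniteDimensional ℝ V]
    (hdim : Module.finrank ℝ V = 2 * n + 1)
    (g : LinearMap.BilinForm ℝ V)
    (hg_symm : ∀ X Y : V, g X Y = g Y X)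
    (hg_nondeg : g.Nondegenerate)
    (φ : V →ₗ[ℝ] V) (ξ : V) (η : V →ₗ[ℝ] ℝ)
    (hφξ : φ ξ = 0) (hηφ : ∀ X : V, η (φ X) = 0)
    (hηξ : η ξ = 1) (hφ2 : ∀ X : V, φ (φ X) = X - η X • ξ)
    (hgφ : ∀ X Y : V, g (φ X) (φ Y) = - g X Y + η X * η Y)
    (R : V →ₗ[ℝ] V →ₗ[ℝ] V →ₗ[ℝ] V)
    (hR_a1 : ∀ X Y Z W : V, g (R X Y Z) W = - g (R Y X Z) W)
    (hR_a2 : ∀ X Y Z W : V, g (R X Y Z) W = - g (R X Y W) Z)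
    (hR_pair : ∀ X Y Z W : V, g (R X Y Z) W = g (R Z W X) Y)
    (α₀ β₀ : ℝ) (dα dβ : V →ₗ[ℝ] ℝ)
    (hTPS : ∀ X Y : V, R X Y ξ =
      -((α₀ ^ 2 + β₀ ^ 2) • (η Y • X - η X • Y))
      - (2 * α₀ * β₀) • (η Y • φ X - η X • φ Y)
      - dα X • φ Y + dα Y • φ X + dβ Y • φ (φ X) - dβ X • φ (φ Y))
    (Qop : V →ₗ[ℝ] V) (hQ : ∀ X Y : V, g (Qop X) Y = Ric R X Y)
    (scal : ℝ) (hscal : scal = LinearMap.trace ℝ V Qop)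
    (A B : V) (hA : ∀ X : V, g A X = dα X) (hB : ∀ X : V, g B X = dβ X)
    :
    Qop ξ = -(2 * (n : ℝ) * (α₀ ^ 2 + β₀ ^ 2) - dβ ξ) • ξ
      + (2 * (n : ℝ) - 1) • B + φ A := by
  classical
  -- g ξ X = η X
  have hgsξ : ∀ X : V, g ξ X = η X := by
    intro X
    have h := hgφ ξ X
    rw [hφξ, hηξ] at h
    simp only [map_zero, LinearMap.zero_apply, one_mul] at h
    linarith
  have hφXξ : ∀ X : V, g (φ X) ξ = 0 := by
    intro X
    rw [hg_symm, hgsξ, hηφ]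
  -- skewness of φ
  have hskew : ∀ X Y : V, g (φ X) Y = - g X (φ Y) := by
    intro X Y
    have h := hgφ X (φ Y)
    rw [hηφ, mul_zero, add_zero, hφ2 Y] at h
    have h2 : g (φ X) (Y - η Y • ξ) = g (φ X) Y - η Y * g (φ X) ξ := by
      rw [map_sub, map_smul]; simp
    rw [h2, hφXξ, mul_zero, sub_zero] at h
    exact h
  have hswap : ∀ X W : V, g (φ W) X = - g (φ X) W := by
    intro X W
    rw [hskew W X, hg_symm W (φ X)]
  -- extensionality via nondegeneracy
  have ext_g : ∀ u v : V, (∀ W, g u W = g v W) → u = v := by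
    intro u v h
    have h0 : ∀ W, g (u - v) W = 0 := by
      intro W
      rw [map_sub, LinearMap.sub_apply, h W, sub_self]
    have := hg_nondeg.1 (u - v) h0
    exact sub_eq_zero.mp this
  -- pointwise curvature formula
  have hptw : ∀ Y X W : V, g (R X ξ Y) W =
      ((α₀^2+β₀^2) * g Y X + (2*α₀*β₀) * g (φ Y) X - dβ Y * η X) * g ξ W
      + (dβ Y - (α₀^2+β₀^2) * η Y) * g X W
      + (2*α₀*β₀ * η Y - dα Y) * g (φ X) W
      + (-(g (φ Y) X)) * g A W
      + (-(g (φ (φ Y)) X)) * g B W := by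
    intro Y X W
    rw [hR_pair, hR_a2, hTPS, hφ2 Y, hφ2 W]
    simp only [map_sub, map_add, map_neg, map_smul, LinearMap.sub_apply, LinearMap.add_apply,
      LinearMap.neg_apply, LinearMap.smul_apply, smul_eq_mul]
    rw [hswap X W, hg_symm W X]
    simp only [hgsξ, hA, hB]
    ring
  -- the operator identity
  have hmap : ∀ Y : V, (LinearMap.applyₗ Y).comp (R.flip ξ) =
      LinearMap.smulRight ((α₀^2+β₀^2) • (g Y) + (2*α₀*β₀) • (g (φ Y)) - dβ Y • η) ξ
      + (dβ Y - (α₀^2+β₀^2) * η Y) • LinearMap.id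
      + (2*α₀*β₀ * η Y - dα Y) • φ
      + LinearMap.smulRight (-(g (φ Y))) A
      + LinearMap.smulRight (-(g (φ (φ Y)))) B := by
    intro Y
    ext X
    apply ext_g
    intro W
    have hL : ((LinearMap.applyₗ Y).comp (R.flip ξ)) X = R X ξ Y := rfl
    rw [hL, hptw Y X W]
    simp only [LinearMap.add_apply, LinearMap.smul_apply, LinearMap.smulRight_apply,
      LinearMap.id_coe, id_eq, LinearMap.sub_apply, LinearMap.neg_apply,
      map_add, map_smul, map_sub, map_neg, smul_eq_mul, neg_smul, sub_smul, add_smul, mul_smul]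
    ring
  -- compute the Ricci curvature in direction ξ
  have hric : ∀ Y : V, Ric R ξ Y =
      (α₀^2+β₀^2) * η Y - dβ Y
      + (dβ Y - (α₀^2+β₀^2) * η Y) * (2*(n:ℝ)+1)
      - dα (φ Y) - dβ Y + η Y * dβ ξ := by
    intro Y
    show LinearMap.trace ℝ V ((LinearMap.applyₗ Y).comp (R.flip ξ)) = _
    rw [hmap Y]
    rw [map_add, map_add, map_add, map_add, map_smul, map_smul,
      trace_smulRight', trace_smulRight', trace_smulRight',
      LinearMap.trace_id, trace_phi g hg_nondeg φ hskew, hdim]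
    simp only [LinearMap.add_apply, LinearMap.sub_apply, LinearMap.smul_apply,
      LinearMap.neg_apply, smul_eq_mul]
    rw [hg_symm Y ξ, hgsξ, hφXξ, hηξ, hg_symm (φ Y) A, hA, hφ2 Y]
    simp only [map_sub, map_smul, LinearMap.sub_apply, LinearMap.smul_apply, smul_eq_mul]
    rw [hg_symm Y B, hB, hg_symm ξ B, hB]
    push_cast
    ring
  apply ext_g
  intro W
  rw [hQ ξ W, hric W]
  simp only [map_add, map_smul, map_neg, LinearMap.add_apply, LinearMap.smul_apply,
    LinearMap.neg_apply, smul_eq_mul]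
  rw [hgsξ, hB, hskew A W, hA]
  push_cast
  ring
end

section
/- (Theorem 3.6.) If the Weyl projective curvature tensor vanishes, i.e. P(X,Y)Z = 0 for all X, Y, Z ∈ V, then Ric(X,Y) = −2n(α₀² + β₀²)g(X,Y) for all X, Y ∈ V (the manifold is Einstein). -/
set_option maxHeartbeats 1000000 in
theorem stmt_9
    (n : ℕ) (hn : 1 ≤ n)
    (V : Type*) [AddCommGroup V] [Module ℝ V] [FiniteDimensional ℝ V]
    (hdim : Module.finrank ℝ V = 2 * n + 1)
    (g : LinearMap.BilinForm ℝ V)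
    (hg_symm : ∀ X Y : V, g X Y = g Y X)
    (hg_nondeg : g.Nondegenerate)
    (φ : V →ₗ[ℝ] V) (ξ : V) (η : V →ₗ[ℝ] ℝ)
    (hφξ : φ ξ = 0) (hηφ : ∀ X : V, η (φ X) = 0)
    (hηξ : η ξ = 1) (hφ2 : ∀ X : V, φ (φ X) = X - η X • ξ)
    (hgφ : ∀ X Y : V, g (φ X) (φ Y) = - g X Y + η X * η Y)
    (R : V →ₗ[ℝ] V →ₗ[ℝ] V →ₗ[ℝ] V)
    (hR_a1 : ∀ X Y Z W : V, g (R X Y Z) W = - g (R Y X Z) W)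
    (hR_a2 : ∀ X Y Z W : V, g (R X Y Z) W = - g (R X Y W) Z)
    (hR_pair : ∀ X Y Z W : V, g (R X Y Z) W = g (R Z W X) Y)
    (α₀ β₀ : ℝ) (dα dβ : V →ₗ[ℝ] ℝ)
    (hTPS : ∀ X Y : V, R X Y ξ =
      -((α₀ ^ 2 + β₀ ^ 2) • (η Y • X - η X • Y))
      - (2 * α₀ * β₀) • (η Y • φ X - η X • φ Y)
      - dα X • φ Y + dα Y • φ X + dβ Y • φ (φ X) - dβ X • φ (φ Y))
    (Qop : V →ₗ[ℝ] V) (hQ : ∀ X Y : V, g (Qop X) Y = Ric R X Y)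
    (scal : ℝ) (hscal : scal = LinearMap.trace ℝ V Qop)
    (A B : V) (hA : ∀ X : V, g A X = dα X) (hB : ∀ X : V, g B X = dβ X)
    (hgrad : φ A = -((2 * (n : ℝ) - 1) • B))
    (P : V → V → V → V)
    (hP : ∀ X Y Z : V, P X Y Z = R X Y Z
      - (1 / (2 * (n : ℝ))) • (Ric R Y Z • X - Ric R X Z • Y))
    (hflat : ∀ X Y Z : V, P X Y Z = 0)
    :
    ∀ X Y : V, Ric R X Y = -(2 * (n : ℝ) * (α₀ ^ 2 + β₀ ^ 2)) * g X Y := by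
  have hn' : (1:ℝ) ≤ (n:ℝ) := by exact_mod_cast hn
  have h2n : (2*(n:ℝ)) ≠ 0 := by nlinarith
  have hR' : ∀ X Y Z : V, R X Y Z
      = (1 / (2 * (n : ℝ))) • (Ric R Y Z • X - Ric R X Z • Y) := by
    intro X Y Z
    have h := hflat X Y Z
    rw [hP] at h
    exact sub_eq_zero.mp h
  have gφξ : ∀ X : V, g (φ X) ξ = 0 := by
    intro X
    have h := hgφ (φ X) ξ
    simp [hφξ, hηφ] at h
    linarith
  have gξξ : g ξ ξ = 1 := by
    have h := hgφ ξ ξ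
    simp [hφξ, hηξ] at h
    linarith
  have gXξ : ∀ X : V, g X ξ = η X := by
    intro X
    have h := gφξ (φ X)
    rw [hφ2 X] at h
    simp [map_sub, LinearMap.sub_apply, map_smul, LinearMap.smul_apply, smul_eq_mul, gξξ] at h
    linarith
  have gξX : ∀ X : V, g ξ X = η X := fun X => (hg_symm ξ X).trans (gXξ X)
  have ηB : η B = 0 := by
    have h := congrArg η hgrad
    simp [hηφ] at h
    rcases h with h | h
    · nlinarith
    · exact h
  have dβξ : dβ ξ = 0 := by rw [← hB ξ, gXξ B, ηB]
  -- Step A : Ric X ξ = Ric ξ ξ * η X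
  have hρXξ : ∀ X : V, Ric R X ξ = Ric R ξ ξ * η X := by
    intro X
    have h := (hR' X ξ ξ).symm.trans (hTPS X ξ)
    have h2 := congrArg (fun v => g v ξ) h
    simp only [map_add, map_sub, map_smul, map_neg, map_zero, LinearMap.add_apply,
      LinearMap.sub_apply, LinearMap.smul_apply, LinearMap.neg_apply, LinearMap.zero_apply,
      smul_eq_mul, hφξ, hηξ, gφξ, gXξ, gξξ] at h2
    field_simp at h2
    linarith
  -- Step B : scalar version of (c r + K) φ² = (dα ξ - 2αβ) φ
  have habs : ∀ X W : V, ((1/(2*(n:ℝ))) * Ric R ξ ξ + (α₀^2+β₀^2)) * (g X W - η X * η W)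
      = (dα ξ - 2*α₀*β₀) * g (φ X) W := by
    intro X W
    have h := (hR' X ξ ξ).symm.trans (hTPS X ξ)
    rw [hφ2 X, hρXξ X, dβξ, hφξ] at h
    have h2 := congrArg (fun v => g v W) h
    simp only [map_add, map_sub, map_smul, map_neg, map_zero, LinearMap.add_apply,
      LinearMap.sub_apply, LinearMap.smul_apply, LinearMap.neg_apply, LinearMap.zero_apply,
      smul_eq_mul, hφξ, hηξ, gξX] at h2
    linear_combination h2
  -- Step C : a nonzero vector in ker η
  have hex : ∃ Y0 : V, η Y0 = 0 ∧ Y0 ≠ 0 := by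
    by_contra hcon
    push_neg at hcon
    have hker : LinearMap.ker η = ⊥ := LinearMap.ker_eq_bot'.mpr (fun m hm => hcon m hm)
    have h1 := LinearMap.finrank_range_add_finrank_ker η
    rw [hker, finrank_bot, hdim] at h1
    have h2 : Module.finrank ℝ (LinearMap.range η) ≤ 1 := by
      simpa using Submodule.finrank_le (LinearMap.range η)
    omega
  obtain ⟨Y0, hY0η, hY0ne⟩ := hex
  have hexW : ∃ W : V, g Y0 W ≠ 0 := by
    by_contra hcon
    push_neg at hcon
    exact hY0ne (hg_nondeg.1 Y0 hcon)
  obtain ⟨W1, hW1⟩ := hexW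
  set W0 : V := W1 - η W1 • ξ with hW0def
  have hW0η : η W0 = 0 := by simp [hW0def, hηξ]
  have hgYW : g Y0 W0 ≠ 0 := by
    have h : g Y0 W0 = g Y0 W1 - η W1 * η Y0 := by
      simp [hW0def, map_sub, map_smul, smul_eq_mul, gXξ]
    rw [h, hY0η]
    simpa using hW1
  -- Step E : the coefficient a vanishes
  have ha : (1/(2*(n:ℝ))) * Ric R ξ ξ + (α₀^2+β₀^2) = 0 := by
    have h1 := habs Y0 (φ W0)
    have h2 := habs W0 Y0
    rw [hY0η] at h1
    rw [hW0η] at h2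
    have hgφY0W0 : g (φ Y0) (φ W0) = - g Y0 W0 := by
      rw [hgφ, hY0η]; ring
    rw [hgφY0W0] at h1
    rw [hg_symm W0 Y0, hg_symm (φ W0) Y0] at h2
    have key : (((1/(2*(n:ℝ))) * Ric R ξ ξ + (α₀^2+β₀^2))^2 + (dα ξ - 2*α₀*β₀)^2) * g Y0 W0 = 0 := by
      linear_combination ((1/(2*(n:ℝ))) * Ric R ξ ξ + (α₀^2+β₀^2)) * h2 + (dα ξ - 2*α₀*β₀) * h1
    rcases mul_eq_zero.mp key with h | h
    · nlinarith [sq_nonneg ((1/(2*(n:ℝ))) * Ric R ξ ξ + (α₀^2+β₀^2)), sq_nonneg (dα ξ - 2*α₀*β₀)]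
    · exact absurd h hgYW
  have hr : Ric R ξ ξ = -(2*(n:ℝ)*(α₀^2+β₀^2)) := by
    field_simp at ha
    linarith
  -- Step F : E1
  have hE1 : ∀ Y W : V, Ric R Y W
      = Ric R ξ W * η Y + Ric R ξ ξ * g Y W - Ric R ξ ξ * η Y * η W := by
    intro Y W
    have h := hR_a2 ξ Y ξ W
    rw [hR' ξ Y ξ, hR' ξ Y W] at h
    simp only [map_add, map_sub, map_smul, map_neg, LinearMap.add_apply,
      LinearMap.sub_apply, LinearMap.smul_apply, LinearMap.neg_apply,
      smul_eq_mul, gξX, gXξ, gξξ, hηξ] at h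
    rw [hρXξ Y] at h
    field_simp at h
    linarith
  -- Step G : Ric ξ Z = Ric ξ ξ * η Z
  have hρξZ : ∀ Z : V, Ric R ξ Z = Ric R ξ ξ * η Z := by
    intro Z
    have h := hR_pair Y0 ξ Z W0
    rw [hR' Y0 ξ Z, hR' Z W0 Y0] at h
    simp only [map_add, map_sub, map_smul, map_neg, LinearMap.add_apply,
      LinearMap.sub_apply, LinearMap.smul_apply, LinearMap.neg_apply,
      smul_eq_mul, gξX, gXξ, gξξ, hηξ, hW0η, hY0η] at h
    have hWY := hE1 W0 Y0
    rw [hW0η] at hWY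
    have h2 : (Ric R ξ Z - Ric R ξ ξ * η Z) * g Y0 W0 = 0 := by
      have hsym : g W0 Y0 = g Y0 W0 := hg_symm _ _
      field_simp at h
      linear_combination h + η Z * hWY + Ric R ξ ξ * η Z * hsym
    rcases mul_eq_zero.mp h2 with h3 | h3
    · linarith
    · exact absurd h3 hgYW
  intro X Y
  have h := hE1 X Y
  rw [hρξZ Y, hr] at h
  rw [h]; ring
end

section
/- (Theorem 3.8.) If the Weyl conformal curvature tensor vanishes, i.e. C(X,Y)Z = 0 for all X, Y, Z ∈ V, then Ric(X,Y) = ((α₀² + β₀²) + scal/(2n))·g(X,Y) − ((2n+1)(α₀² + β₀²) + scal/(2n))·η(X)η(Y) for all X, Y ∈ V (the manifold is η-Einstein). -/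
open LinearMap Matrix


/-- trace of a rank-one map `X ↦ ℓ X • v` is `ℓ v`. -/
lemma aux_trace_smulRight {V : Type*} [AddCommGroup V] [Module ℝ V] [FiniteDimensional ℝ V]
    (ℓ : V →ₗ[ℝ] ℝ) (v : V) :
    LinearMap.trace ℝ V (ℓ.smulRight v) = ℓ v := by
  have h1 : ℓ.smulRight v = (LinearMap.toSpanSingleton ℝ V v).comp ℓ := by
    ext x; simp [LinearMap.toSpanSingleton_apply]
  rw [h1, LinearMap.trace_comp_comm']
  set f := ℓ.comp (LinearMap.toSpanSingleton ℝ V v) with hf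
  have h2 : f = (f 1) • LinearMap.id := by
    refine LinearMap.ext fun x => ?_
    have hx : x = x • (1:ℝ) := by simp
    rw [hx, _root_.map_smul]
    simp [smul_eq_mul, mul_comm]
  rw [h2, _root_.map_smul, LinearMap.trace_id]
  simp [hf, LinearMap.toSpanSingleton_apply, Module.finrank_self]

/-- a g-skew endomorphism of a space with nondegenerate bilinear form has trace 0. -/
lemma aux_trace_skew {V : Type*} [AddCommGroup V] [Module ℝ V] [FiniteDimensional ℝ V]
    (g : LinearMap.BilinForm ℝ V) (hg : g.Nondegenerate)
    (φ : V →ₗ[ℝ] V) (hskew : ∀ X Y : V, g (φ X) Y = - g X (φ Y)) :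
    LinearMap.trace ℝ V φ = 0 := by
  classical
  let b := Module.finBasis ℝ V
  set M := LinearMap.toMatrix b b φ with hM
  set G := LinearMap.BilinForm.toMatrix b g with hG
  have hcomp : g.compLeft φ = - g.compRight φ := by
    ext X Y
    simp [LinearMap.BilinForm.compLeft_apply, LinearMap.BilinForm.compRight_apply, hskew]
  have hmat : Mᵀ * G = -(G * M) := by
    rw [hM, hG, ← _root_.BilinForm.toMatrix_compLeft, ← _root_.BilinForm.toMatrix_compRight,
      hcomp]
    exact map_neg (LinearMap.BilinForm.toMatrix b) _
  have hdet : G.det ≠ 0 := ((LinearMap.BilinForm.nondegenerate_iff_det_ne_zero b).mp hg)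
  have hGinv : G * G⁻¹ = 1 := Matrix.mul_nonsing_inv G hdet.isUnit
  have h1 : Mᵀ = -(G * M) * G⁻¹ := by
    calc Mᵀ = Mᵀ * (G * G⁻¹) := by rw [hGinv, Matrix.mul_one]
    _ = (Mᵀ * G) * G⁻¹ := by rw [Matrix.mul_assoc]
    _ = -(G * M) * G⁻¹ := by rw [hmat]
  have h2 : Matrix.trace (Mᵀ) = Matrix.trace M := Matrix.trace_transpose M
  rw [h1, Matrix.neg_mul, Matrix.trace_neg, Matrix.trace_mul_cycle,
    Matrix.nonsing_inv_mul G hdet.isUnit, Matrix.one_mul] at h2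
  have : Matrix.trace M = 0 := by linarith
  rw [LinearMap.trace_eq_matrix_trace ℝ b φ, ← hM, this]



theorem stmt_11
    (n : ℕ) (hn : 1 ≤ n)
    (V : Type*) [AddCommGroup V] [Module ℝ V] [FiniteDimensional ℝ V]
    (hdim : Module.finrank ℝ V = 2 * n + 1)
    (g : LinearMap.BilinForm ℝ V)
    (hg_symm : ∀ X Y : V, g X Y = g Y X)
    (hg_nondeg : g.Nondegenerate)
    (φ : V →ₗ[ℝ] V) (ξ : V) (η : V →ₗ[ℝ] ℝ)
    (hφξ : φ ξ = 0) (hηφ : ∀ X : V, η (φ X) = 0)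
    (hηξ : η ξ = 1) (hφ2 : ∀ X : V, φ (φ X) = X - η X • ξ)
    (hgφ : ∀ X Y : V, g (φ X) (φ Y) = - g X Y + η X * η Y)
    (R : V →ₗ[ℝ] V →ₗ[ℝ] V →ₗ[ℝ] V)
    (hR_a1 : ∀ X Y Z W : V, g (R X Y Z) W = - g (R Y X Z) W)
    (hR_a2 : ∀ X Y Z W : V, g (R X Y Z) W = - g (R X Y W) Z)
    (hR_pair : ∀ X Y Z W : V, g (R X Y Z) W = g (R Z W X) Y)
    (α₀ β₀ : ℝ) (dα dβ : V →ₗ[ℝ] ℝ)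
    (hTPS : ∀ X Y : V, R X Y ξ =
      -((α₀ ^ 2 + β₀ ^ 2) • (η Y • X - η X • Y))
      - (2 * α₀ * β₀) • (η Y • φ X - η X • φ Y)
      - dα X • φ Y + dα Y • φ X + dβ Y • φ (φ X) - dβ X • φ (φ Y))
    (Qop : V →ₗ[ℝ] V) (hQ : ∀ X Y : V, g (Qop X) Y = Ric R X Y)
    (scal : ℝ) (hscal : scal = LinearMap.trace ℝ V Qop)
    (A B : V) (hA : ∀ X : V, g A X = dα X) (hB : ∀ X : V, g B X = dβ X)
    (hgrad : φ A = -((2 * (n : ℝ) - 1) • B))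
    (C : V → V → V → V)
    (hC : ∀ X Y Z : V, C X Y Z = R X Y Z
      - (1 / (2 * (n : ℝ) - 1)) • (g Y Z • Qop X - g X Z • Qop Y
        + Ric R Y Z • X - Ric R X Z • Y)
      + (scal / (2 * (n : ℝ) * (2 * (n : ℝ) - 1))) • (g Y Z • X - g X Z • Y))
    (hflat : ∀ X Y Z : V, C X Y Z = 0)
    :
    ∀ X Y : V, Ric R X Y =
      ((α₀ ^ 2 + β₀ ^ 2) + scal / (2 * (n : ℝ))) * g X Y
      - ((2 * (n : ℝ) + 1) * (α₀ ^ 2 + β₀ ^ 2) + scal / (2 * (n : ℝ))) * (η X * η Y) := by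
  have hn' : (1:ℝ) ≤ (n:ℝ) := by exact_mod_cast hn
  have h2n1 : (2*(n:ℝ) - 1) ≠ 0 := by linarith
  have h2n : (2*(n:ℝ)) ≠ 0 := by linarith
  -- basic identities
  have hgξ : ∀ Y : V, g ξ Y = η Y := by
    intro Y
    have h := hgφ ξ Y
    rw [hφξ, _root_.map_zero, hηξ] at h
    simp only [LinearMap.zero_apply, one_mul] at h
    linarith
  have hgXξ : ∀ X : V, g X ξ = η X := fun X => by rw [hg_symm, hgξ]
  have hskew : ∀ X Y : V, g (φ X) Y = - g X (φ Y) := by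
    intro X Y
    have h := hgφ (φ X) Y
    rw [hφ2 X, hηφ, map_sub, _root_.map_smul] at h
    simp only [LinearMap.sub_apply, LinearMap.smul_apply, smul_eq_mul, hgξ, hηφ, mul_zero,
      sub_zero, zero_mul, add_zero] at h
    linarith
  have hηB : η B = 0 := by
    have h := congrArg η hgrad
    rw [hηφ, map_neg, _root_.map_smul] at h
    simp only [smul_eq_mul] at h
    have := h.symm
    nlinarith [this]
  have hdβξ : dβ ξ = 0 := by rw [← hB, hgXξ, hηB]
  have hgZφA : ∀ Z : V, g Z (φ A) = -(2*(n:ℝ)-1) * dβ Z := by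
    intro Z
    rw [hgrad]
    simp only [map_neg, _root_.map_smul, smul_eq_mul]
    rw [hg_symm Z B, hB]
    ring
  have hdαφ : ∀ Y : V, dα (φ Y) = (2*(n:ℝ)-1) * dβ Y := by
    intro Y
    have h1 : g (φ A) Y = - dα (φ Y) := by rw [hskew A Y, hA]
    have h2 : g (φ A) Y = -(2*(n:ℝ)-1) * dβ Y := by rw [hg_symm, hgZφA]
    rw [h1] at h2
    linarith
  have htrφ : LinearMap.trace ℝ V φ = 0 := aux_trace_skew g hg_nondeg φ hskew
  have hφ2c : φ ∘ₗ φ = LinearMap.id - η.smulRight ξ := by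
    refine LinearMap.ext fun X => ?_
    simp [hφ2 X]
  have htrφ2 : LinearMap.trace ℝ V (φ ∘ₗ φ) = 2*(n:ℝ) := by
    rw [hφ2c, map_sub, LinearMap.trace_id, aux_trace_smulRight, hηξ, hdim]
    push_cast
    ring
  -- dα ξ = 2 α β
  have hdαξ : dα ξ = 2*α₀*β₀ := by
    by_contra hne
    have hkey : ∀ X W : V, (dα ξ - 2*α₀*β₀) * g (φ X) W = 0 := by
      intro X W
      have e1 : g (R X ξ ξ) W = - g (R ξ W ξ) X := by
        rw [hR_pair X ξ ξ W, hR_a2 ξ W X ξ]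
      rw [hTPS X ξ, hTPS ξ W] at e1
      simp only [hφξ, hφ2, map_sub, map_add, map_neg, _root_.map_smul, LinearMap.sub_apply,
        LinearMap.add_apply, LinearMap.neg_apply, LinearMap.smul_apply, smul_eq_mul,
        hηξ, hdβξ, _root_.map_zero, LinearMap.zero_apply, hgξ, hgXξ, hηφ, smul_zero,
        mul_zero, zero_mul, sub_zero, zero_sub, add_zero, zero_add, one_mul, mul_one] at e1
      linear_combination (1/2)*e1 + ((α₀^2+β₀^2)/2)*hg_symm X W
        + ((dα ξ - 2*α₀*β₀)/2)*hg_symm (φ W) X + ((dα ξ - 2*α₀*β₀)/2)*hskew X W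
    have hφ0 : ∀ X : V, φ X = (0:V) := by
      intro X
      have h0 : ((dα ξ - 2*α₀*β₀) • (φ X) : V) = 0 := by
        apply hg_nondeg.1
        intro W
        rw [_root_.map_smul]
        simpa [smul_eq_mul] using hkey X W
      rcases smul_eq_zero.mp h0 with h | h
      · exact absurd (by linarith : dα ξ = 2*α₀*β₀) hne
      · exact h
    have heq : ∀ X : V, X = η X • ξ := by
      intro X
      have h := hφ2 X
      rw [hφ0 (φ X)] at h
      have : X - η X • ξ = 0 := h.symm
      have := sub_eq_zero.mp this
      exact this
    have hker : LinearMap.ker η = ⊥ := by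
      rw [LinearMap.ker_eq_bot']
      intro x hx
      rw [heq x, hx, zero_smul]
    have hinj : Function.Injective η := LinearMap.ker_eq_bot.mp hker
    have hle := LinearMap.finrank_le_finrank_of_injective hinj
    rw [hdim, Module.finrank_self] at hle
    omega
  -- Ricci in the second slot at ξ
  have hRicYξ : ∀ Y : V, Ric R Y ξ = -(2*(n:ℝ)*(α₀^2+β₀^2)) * η Y := by
    intro Y
    have hL : (LinearMap.applyₗ ξ).comp (R.flip Y) =
        (-((α₀^2+β₀^2) * η Y)) • LinearMap.id + (α₀^2+β₀^2) • η.smulRight Y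
        + (-(2*α₀*β₀ * η Y)) • φ + (2*α₀*β₀) • η.smulRight (φ Y)
        + (-(1:ℝ)) • dα.smulRight (φ Y) + dα Y • φ
        + dβ Y • (φ ∘ₗ φ) + (-(1:ℝ)) • dβ.smulRight (φ (φ Y)) := by
      refine LinearMap.ext fun X => ?_
      simp only [LinearMap.comp_apply, LinearMap.applyₗ_apply_apply, LinearMap.flip_apply,
        LinearMap.add_apply, LinearMap.smul_apply, LinearMap.id_apply,
        LinearMap.smulRight_apply, LinearMap.neg_apply]
      rw [hTPS X Y]
      module
    rw [Ric, hL]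
    simp only [map_add, _root_.map_smul, LinearMap.trace_id, aux_trace_smulRight,
      htrφ, htrφ2, smul_eq_mul, hdim]
    rw [hdαφ Y]
    have hdβφ2 : dβ (φ (φ Y)) = dβ Y := by
      rw [hφ2 Y, map_sub, _root_.map_smul]
      simp [hdβξ]
    rw [hdβφ2, hηφ]
    push_cast
    ring
  -- Ricci in the first slot at ξ
  have hRicξZ : ∀ Z : V, Ric R ξ Z = -(2*(n:ℝ)*(α₀^2+β₀^2)) * η Z := by
    intro Z
    set T : V →ₗ[ℝ] V :=
        (α₀^2+β₀^2) • (g Z).smulRight ξ + (-((α₀^2+β₀^2) * η Z)) • LinearMap.id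
        + (2*α₀*β₀) • (g (φ Z)).smulRight ξ + (2*α₀*β₀ * η Z) • φ
        + (-(dα Z)) • φ + (-(1:ℝ)) • (g (φ Z)).smulRight A
        + (-(1:ℝ)) • (g (φ (φ Z))).smulRight B + dβ Z • (φ ∘ₗ φ) with hTdef
    have hT : (LinearMap.applyₗ Z).comp (R.flip ξ) = T := by
      refine LinearMap.ext fun X => ?_
      have hW : ∀ W : V, g (((LinearMap.applyₗ Z).comp (R.flip ξ)) X) W = g (T X) W := by
        intro W
        rw [hTdef]
        have e1 : g (R X ξ Z) W = - g (R Z W ξ) X := by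
          rw [hR_pair X ξ Z W, hR_a2 Z W X ξ]
        simp only [LinearMap.comp_apply, LinearMap.applyₗ_apply_apply, LinearMap.flip_apply]
        rw [e1, hTPS Z W]
        simp only [hφ2, map_sub, map_add, map_neg, _root_.map_smul, LinearMap.sub_apply,
          LinearMap.add_apply, LinearMap.neg_apply, LinearMap.smul_apply, smul_eq_mul,
          LinearMap.smulRight_apply, LinearMap.id_apply, hgξ, hgXξ, hηφ, hηξ, hA, hB,
          _root_.map_zero, LinearMap.zero_apply, smul_zero, mul_zero, zero_mul, sub_zero,
          zero_sub, add_zero, zero_add, one_mul, mul_one]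
        rw [LinearMap.comp_apply, hφ2 X, map_sub, _root_.map_smul]
        simp only [LinearMap.sub_apply, LinearMap.smul_apply, smul_eq_mul, hgξ]
        linear_combination ((α₀^2+β₀^2)*η Z - dβ Z) * hg_symm X W
          + (dα Z - 2*α₀*β₀*η Z) * hskew X W + (dα Z - 2*α₀*β₀*η Z) * hg_symm (φ W) X
      have h0 : ((LinearMap.applyₗ Z).comp (R.flip ξ)) X - T X = 0 := by
        apply hg_nondeg.1
        intro W
        rw [map_sub, LinearMap.sub_apply, hW W, sub_self]
      exact sub_eq_zero.mp h0
    rw [Ric, hT, hTdef]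
    simp only [map_add, _root_.map_smul, LinearMap.trace_id, aux_trace_smulRight,
      htrφ, htrφ2, smul_eq_mul, hdim]
    have t1 : g Z ξ = η Z := hgXξ Z
    have t2 : g (φ Z) ξ = η (φ Z) := hgXξ (φ Z)
    have t3 : g (φ Z) A = (2*(n:ℝ)-1) * dβ Z := by
      rw [hskew Z A, hgZφA Z]; ring
    have t4 : g (φ (φ Z)) B = dβ Z := by
      rw [hφ2 Z, map_sub, _root_.map_smul]
      simp only [LinearMap.sub_apply, LinearMap.smul_apply, smul_eq_mul, hgξ, hηB, mul_zero,
        sub_zero]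
      rw [hg_symm Z B, hB]
    rw [t1, t2, t3, t4, hηφ]
    push_cast
    ring
  -- main computation
  intro X Y
  have hq1 : g (Qop ξ) ξ = -(2*(n:ℝ)*(α₀^2+β₀^2)) := by
    rw [hQ, hRicξZ ξ, hηξ, mul_one]
  have hq2 : g (Qop X) ξ = -(2*(n:ℝ)*(α₀^2+β₀^2)) * η X := by
    rw [hQ, hRicYξ X]
  have hRt : g (R ξ X Y) ξ = (α₀^2+β₀^2) * (η X * η Y - g X Y) := by
    rw [hR_a2 ξ X Y ξ, hTPS ξ X]
    simp only [hφξ, map_sub, map_add, map_neg, _root_.map_smul, LinearMap.sub_apply,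
      LinearMap.add_apply, LinearMap.neg_apply, LinearMap.smul_apply, smul_eq_mul, hηξ,
      hdβξ, hdαξ, _root_.map_zero, LinearMap.zero_apply, smul_zero, mul_zero, zero_mul,
      sub_zero, zero_sub, add_zero, zero_add, one_mul, mul_one, hgξ, hφ2]
    ring
  have E := hflat ξ X Y
  rw [hC] at E
  have E2 := congrArg (fun v => g v ξ) E
  simp only [map_add, map_sub, _root_.map_smul, LinearMap.add_apply, LinearMap.sub_apply,
    LinearMap.smul_apply, smul_eq_mul, _root_.map_zero, LinearMap.zero_apply,
    hgξ, hgXξ, hηξ, mul_one] at E2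
  have hq1' : η (Qop ξ) = -(2*(n:ℝ)*(α₀^2+β₀^2)) := by rw [← hgXξ (Qop ξ)]; exact hq1
  have hq2' : η (Qop X) = -(2*(n:ℝ)*(α₀^2+β₀^2)) * η X := by rw [← hgXξ (Qop X)]; exact hq2
  have hRt' : η (R ξ X Y) = (α₀^2+β₀^2) * (η X * η Y - g X Y) := by
    rw [← hgXξ (R ξ X Y)]; exact hRt
  rw [hRt', hq1', hq2', hRicξZ Y] at E2
  have hc : (2*(n:ℝ) - 1) ≠ 0 := h2n1
  field_simp at E2
  have G2 : (Ric R X Y * (2*(n:ℝ))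
      - ((((α₀^2+β₀^2))*(2*(n:ℝ)) + scal) * g X Y
        - ((2*(n:ℝ)+1)*(α₀^2+β₀^2)*(2*(n:ℝ)) + scal) * (η X * η Y))) * (2*(n:ℝ)-1) = 0 := by
    linear_combination -(2*(n:ℝ)-1) * E2
  have G3 := (mul_eq_zero.mp G2).resolve_right h2n1
  field_simp
  linarith [G3]
end

section
/- (Theorem 3.14.) If the PC-Bochner curvature tensor vanishes, i.e. 𝐁(X,Y,Z,W) = 0 for all X, Y, Z, W ∈ V (para-contact conformal flatness), then α₀² + β₀² = 1. -/
theorem stmt_17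
    (n : ℕ) (hn : 1 ≤ n)
    (V : Type*) [AddCommGroup V] [Module ℝ V] [FiniteDimensional ℝ V]
    (hdim : Module.finrank ℝ V = 2 * n + 1)
    (g : LinearMap.BilinForm ℝ V)
    (hg_symm : ∀ X Y : V, g X Y = g Y X)
    (hg_nondeg : g.Nondegenerate)
    (φ : V →ₗ[ℝ] V) (ξ : V) (η : V →ₗ[ℝ] ℝ)
    (hφξ : φ ξ = 0) (hηφ : ∀ X : V, η (φ X) = 0)
    (hηξ : η ξ = 1) (hφ2 : ∀ X : V, φ (φ X) = X - η X • ξ)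
    (hgφ : ∀ X Y : V, g (φ X) (φ Y) = - g X Y + η X * η Y)
    (R : V →ₗ[ℝ] V →ₗ[ℝ] V →ₗ[ℝ] V)
    (hR_a1 : ∀ X Y Z W : V, g (R X Y Z) W = - g (R Y X Z) W)
    (hR_a2 : ∀ X Y Z W : V, g (R X Y Z) W = - g (R X Y W) Z)
    (hR_pair : ∀ X Y Z W : V, g (R X Y Z) W = g (R Z W X) Y)
    (α₀ β₀ : ℝ) (dα dβ : V →ₗ[ℝ] ℝ)
    (hTPS : ∀ X Y : V, R X Y ξ =
      -((α₀ ^ 2 + β₀ ^ 2) • (η Y • X - η X • Y))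
      - (2 * α₀ * β₀) • (η Y • φ X - η X • φ Y)
      - dα X • φ Y + dα Y • φ X + dβ Y • φ (φ X) - dβ X • φ (φ Y))
    (Qop : V →ₗ[ℝ] V) (hQ : ∀ X Y : V, g (Qop X) Y = Ric R X Y)
    (scal : ℝ) (hscal : scal = LinearMap.trace ℝ V Qop)
    (A B : V) (hA : ∀ X : V, g A X = dα X) (hB : ∀ X : V, g B X = dβ X)
    (hgrad : φ A = -((2 * (n : ℝ) - 1) • B))
    (k : ℝ) (hk : k = -((scal - 2 * (n : ℝ)) / (2 * (n : ℝ) + 2)))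
    (Bt : V → V → V → V → ℝ)
    (hBt : ∀ X Y Z W : V, Bt X Y Z W = g (R X Y Z) W
      + (1 / (2 * (n : ℝ) + 4)) * (Ric R X Z * g Y W - Ric R Y Z * g X W
        + Ric R Y W * g X Z - Ric R X W * g Y Z
        + Ric R (φ X) Z * g Y (φ W) - Ric R (φ Y) Z * g X (φ W)
        + Ric R (φ Y) W * g X (φ Z) - Ric R (φ X) W * g Y (φ Z)
        + 2 * Ric R (φ X) Y * g Z (φ W) + 2 * Ric R (φ Z) W * g X (φ Y)
        - Ric R X Z * (η Y * η W) + Ric R Y Z * (η X * η W)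
        - Ric R Y W * (η X * η Z) + Ric R X W * (η Y * η Z))
      + ((k - 4) / (2 * (n : ℝ) + 4)) * (g X Z * g Y W - g Y Z * g X W)
      - ((k + 2 * (n : ℝ)) / (2 * (n : ℝ) + 4)) * (g Y (φ W) * g X (φ Z)
        - g X (φ W) * g Y (φ Z) + 2 * g X (φ Y) * g Z (φ W))
      - (k / (2 * (n : ℝ) + 4)) * (g X Z * (η Y * η W) - g Y Z * (η X * η W)
        + g Y W * (η X * η Z) - g X W * (η Y * η Z)))
    (hflat : ∀ X Y Z W : V, Bt X Y Z W = 0)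
    :
    α₀ ^ 2 + β₀ ^ 2 = 1 := by
  have hn' : (1:ℝ) ≤ (n:ℝ) := by exact_mod_cast hn
  -- g X ξ = η X
  have hgXξ : ∀ X : V, g X ξ = η X := by
    intro X
    have h := hgφ X ξ
    rw [hφξ, hηξ, map_zero] at h
    linarith
  have hgξX : ∀ X : V, g ξ X = η X := fun X => (hg_symm ξ X).trans (hgXξ X)
  -- φ is g-skew
  have hskew : ∀ X Y : V, g (φ X) Y = - g X (φ Y) := by
    intro X Y
    have h := hgφ X (φ Y)
    rw [hφ2 Y] at h
    simp only [map_sub, map_smul, hgXξ, hηφ, smul_eq_mul, mul_zero, sub_zero] at h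
    linarith
  have hgφXX : ∀ X : V, g (φ X) X = 0 := by
    intro X
    have h1 := hskew X X
    have h2 := hg_symm X (φ X)
    linarith
  have hgXφX : ∀ X : V, g X (φ X) = 0 := fun X => (hg_symm X (φ X)).trans (hgφXX X)
  have hgξφ : ∀ X : V, g ξ (φ X) = 0 := fun X => (hgξX (φ X)).trans (hηφ X)
  -- dβ ξ = 0
  have hc0 : dβ ξ = 0 := by
    have h1 : g (φ A) ξ = 0 := (hgXξ (φ A)).trans (hηφ A)
    rw [hgrad] at h1
    simp only [map_neg, map_smul, LinearMap.neg_apply, LinearMap.smul_apply, smul_eq_mul,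
      hB, neg_eq_zero] at h1
    have hne : (2 * (n:ℝ) - 1) ≠ 0 := by linarith
    rcases mul_eq_zero.mp h1 with h | h
    · exact absurd h hne
    · exact h
  -- trace of φ is zero
  have htrφ : LinearMap.trace ℝ V φ = 0 := by
    set e := g.toDual hg_nondeg with he
    have hconj : e.conj φ = - (Module.Dual.transpose (R := ℝ) φ) := by
      refine LinearMap.ext fun f => LinearMap.ext fun X => ?_
      have key : g (φ (e.symm f)) X = - f (φ X) := by
        rw [hskew]
        congr 1
        exact LinearMap.BilinForm.apply_toDual_symm_apply (hB := hg_nondeg) f (φ X)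
      simpa [LinearEquiv.conj_apply, Module.Dual.transpose_apply, he, LinearMap.BilinForm.toDual_def] using key
    have h1 := LinearMap.trace_conj' φ e
    rw [hconj] at h1
    rw [show (LinearMap.trace ℝ (Module.Dual ℝ V)) (-(Module.Dual.transpose (R := ℝ) φ))
        = -(LinearMap.trace ℝ (Module.Dual ℝ V)) (Module.Dual.transpose (R := ℝ) φ)
        from LinearMap.map_neg (LinearMap.trace ℝ (Module.Dual ℝ V))
          (Module.Dual.transpose (R := ℝ) φ), LinearMap.trace_transpose'] at h1
    linarith
  -- the linear map X ↦ R X ξ ξ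
  have hRξξmap : ((LinearMap.applyₗ (R := ℝ) ξ).comp (R.flip ξ)) =
      (-(α₀^2+β₀^2)) • (LinearMap.id : V →ₗ[ℝ] V)
      + (α₀^2+β₀^2) • (η.smulRight ξ) + (dα ξ - 2*α₀*β₀) • φ := by
    refine LinearMap.ext fun X => ?_
    have h := hTPS X ξ
    rw [hηξ, hφξ, hc0] at h
    simp only [LinearMap.coe_comp, Function.comp_apply, LinearMap.flip_apply,
      LinearMap.applyₗ, LinearMap.applyₗ', LinearMap.coe_mk, AddHom.coe_mk,
      LinearMap.id_coe, id_eq, LinearMap.add_apply, LinearMap.smul_apply,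
      LinearMap.smulRight_apply, LinearMap.id_apply]
    show R X ξ ξ = _
    rw [h]
    simp only [map_zero, smul_zero, sub_zero, zero_smul, add_zero, one_smul]
    module
  have hRicξξ : Ric R ξ ξ = -(2*(n:ℝ)) * (α₀^2+β₀^2) := by
    unfold Ric
    rw [hRξξmap, map_add, map_add, map_smul, map_smul, map_smul, htrφ, LinearMap.trace_id, hdim]
    have h2 : LinearMap.trace ℝ V (η.smulRight ξ) = 1 := by
      have e1 : η.smulRight ξ = (LinearMap.toSpanSingleton ℝ V ξ).comp η := by
        refine LinearMap.ext fun X => ?_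
        simp [LinearMap.toSpanSingleton_apply]
      rw [e1, LinearMap.trace_comp_comm']
      have e2 : η ∘ₗ LinearMap.toSpanSingleton ℝ V ξ = η ξ • (LinearMap.id : ℝ →ₗ[ℝ] ℝ) := by
        refine LinearMap.ext fun r => ?_
        simp [LinearMap.toSpanSingleton_apply, mul_comm]
      rw [e2, map_smul, LinearMap.trace_id, Module.finrank_self, hηξ]
      simp
    rw [h2]
    push_cast
    simp only [smul_eq_mul]
    ring
  -- find X₀ with η X₀ = 0 and g X₀ X₀ ≠ 0
  obtain ⟨X₀, hη0, ht⟩ : ∃ X : V, η X = 0 ∧ g X X ≠ 0 := by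
    have hker : ∃ X : V, X ≠ 0 ∧ η X = 0 := by
      have h1 : LinearMap.ker η ≠ ⊥ := by
        intro hbot
        have h2 := LinearMap.finrank_range_add_finrank_ker η
        rw [hbot, finrank_bot, add_zero, hdim] at h2
        have h3 : Module.finrank ℝ (LinearMap.range η) ≤ Module.finrank ℝ ℝ :=
          Submodule.finrank_le _
        rw [Module.finrank_self] at h3
        omega
      obtain ⟨X, hX, hX0⟩ := Submodule.exists_mem_ne_zero_of_ne_bot h1
      exact ⟨X, hX0, LinearMap.mem_ker.mp hX⟩
    obtain ⟨X₁, hX₁ne, hX₁η⟩ := hker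
    by_cases hcase : g X₁ X₁ ≠ 0
    · exact ⟨X₁, hX₁η, hcase⟩
    push_neg at hcase
    have hsep : ∃ Y : V, g X₁ Y ≠ 0 := by
      by_contra hall
      push_neg at hall
      exact hX₁ne (hg_nondeg.1 X₁ hall)
    obtain ⟨Y, hY⟩ := hsep
    set Z := Y - η Y • ξ with hZ
    have hZη : η Z = 0 := by simp [hZ, hηξ]
    have hgXZ : g X₁ Z = g X₁ Y := by
      simp [hZ, map_sub, map_smul, hgXξ, hX₁η]
    by_cases h2 : g Z Z ≠ 0
    · exact ⟨Z, hZη, h2⟩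
    push_neg at h2
    refine ⟨X₁ + Z, by simp [hX₁η, hZη], ?_⟩
    have hsym : g Z X₁ = g X₁ Z := hg_symm Z X₁
    have hexp : g (X₁ + Z) (X₁ + Z) = g X₁ X₁ + g X₁ Z + g Z X₁ + g Z Z := by
      simp only [map_add, LinearMap.add_apply]
      ring
    rw [hexp, hcase, h2, hsym, hgXZ]
    simpa using mul_ne_zero (two_ne_zero) hY
  -- plug (X₀, ξ, ξ, X₀) into flatness
  have h := hflat X₀ ξ ξ X₀
  rw [hBt, hTPS X₀ ξ] at h
  simp only [hφξ, hηξ, hη0, hc0, map_zero, map_add, map_sub, map_neg, map_smul,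
    LinearMap.add_apply, LinearMap.sub_apply, LinearMap.neg_apply, LinearMap.smul_apply,
    LinearMap.zero_apply, smul_eq_mul, zero_smul, smul_zero, one_smul, zero_mul, mul_zero,
    sub_zero, add_zero, zero_add, neg_zero, hgXξ, hgξX, hηφ, hgφXX, hgXφX, hgξφ, hRicξξ,
    mul_one, one_mul, zero_sub, sub_self] at h
  have hden : (2 * (n:ℝ) + 4) ≠ 0 := by linarith
  field_simp at h
  have hfin : (α₀ ^ 2 + β₀ ^ 2 - 1) * g X₀ X₀ = 0 := by linear_combination -h / 4
  rcases mul_eq_zero.mp hfin with h3 | h3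
  · linarith
  · exact absurd h3 ht
end
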